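/- Let n be a positive even integer and let V₁ ∈ ℂ^{n×m₁}, V₂ ∈ ℂ^{n×m₂} be matrices with rank(V₁) ≥ n/2 and rank(V₂) ≥ n/2, and suppose that the number of row indices t for which row t of V₁ and row t of V₂ are both zero is strictly less than n/2. Then the set of pairs (d₁, d₂) ∈ ℂⁿ × ℂⁿ for which rank([diag(d₁)V₁ | diag(d₂)V₂]) ≤ n/2 is a Lebesgue-null set in ℂⁿ × ℂⁿ. (Almost-sure form of Lemma 1 of the paper: for almost all channel realizations, if the common silent slots of two jointly interfering transmitters number fewer than n/2, then their joint interference occupies more than an (n/2)-dimensional subspace.) -/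

import Mathlib

open MeasureTheory Matrix MvPolynomial

/-! ### Measurability of multivariate polynomial evaluation -/

private lemma measurable_mv_eval {ι : Type*} (p : MvPolynomial ι ℂ) :
    Measurable fun x : ι → ℂ => MvPolynomial.eval x p := by
  induction p using MvPolynomial.induction_on with
  | C a => simp only [MvPolynomial.eval_C]; exact measurable_const
  | add p q hp hq => simpa [Pi.add_def] using hp.add hq
  | mul_X p i hp => simpa [Pi.mul_def] using hp.mul (measurable_pi_apply i)

/-! ### The zero set of a nonzero multivariate polynomial is null -/

private lemma mv_null_fin : ∀ (k : ℕ) (p : MvPolynomial (Fin k) ℂ), p ≠ 0 →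
    volume {x : Fin k → ℂ | MvPolynomial.eval x p = 0} = 0 := by
  intro k
  induction k with
  | zero =>
    intro p hp
    obtain ⟨a, rfl⟩ := MvPolynomial.C_surjective (Fin 0) p
    have ha : a ≠ 0 := fun h => hp (by simp [h])
    have h0 : {x : Fin 0 → ℂ | MvPolynomial.eval x (MvPolynomial.C a) = 0} = ∅ := by
      ext x; simp [ha]
    rw [h0, measure_empty]
  | succ k ih =>
    intro p hp
    set q := MvPolynomial.finSuccEquiv ℂ k p with hq
    have hqne : q ≠ 0 := by
      intro h
      exact hp ((map_eq_zero_iff _ (MvPolynomial.finSuccEquiv ℂ k).injective).mp h)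
    obtain ⟨i₀, hi₀⟩ : ∃ i, q.coeff i ≠ 0 := by
      by_contra h
      push_neg at h
      exact hqne (Polynomial.ext fun i => by simp [h i])
    -- the set in (tail, head) coordinates
    set T' : Set ((Fin k → ℂ) × ℂ) :=
      {y | MvPolynomial.eval (Fin.cons y.2 y.1) p = 0} with hT'
    have hmeas' : Measurable fun y : (Fin k → ℂ) × ℂ =>
        MvPolynomial.eval (Fin.cons y.2 y.1 : Fin (k+1) → ℂ) p := by
      refine (measurable_mv_eval p).comp ?_
      refine measurable_pi_lambda _ fun i => ?_
      refine Fin.cases ?_ (fun j => ?_) i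
      · simpa using measurable_snd
      · simpa [Function.comp_def] using (measurable_pi_apply j).comp measurable_fst
    have hT'meas : MeasurableSet T' := hmeas' (measurableSet_singleton 0)
    have hT'null : ((volume : Measure (Fin k → ℂ)).prod (volume : Measure ℂ)) T' = 0 := by
      rw [MeasureTheory.Measure.measure_prod_null hT'meas]
      have hZ : volume {s : Fin k → ℂ | MvPolynomial.eval s (q.coeff i₀) = 0} = 0 :=
        ih _ hi₀
      have hmem : {s : Fin k → ℂ | MvPolynomial.eval s (q.coeff i₀) ≠ 0} ∈
          ae (volume : Measure (Fin k → ℂ)) := by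
        rw [mem_ae_iff, Set.compl_setOf]
        simp only [ne_eq, not_not]
        exact hZ
      refine Filter.eventuallyEq_of_mem hmem fun s hs => ?_
      simp only [Set.mem_setOf_eq] at hs
      have hqs : Polynomial.map (MvPolynomial.eval s) q ≠ 0 := by
        intro h
        apply hs
        have := MvPolynomial.coeff_eval_eq_eval_coeff (s' := s) (f := q) (i := i₀)
        rw [h] at this
        simpa using this.symm
      have hslice : (Prod.mk s ⁻¹' T')
          = {a : ℂ | Polynomial.IsRoot (Polynomial.map (MvPolynomial.eval s) q) a} := by
        ext a
        simp only [Set.mem_preimage, hT', Set.mem_setOf_eq, Polynomial.IsRoot]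
        rw [MvPolynomial.eval_eq_eval_mv_eval']
      simp only [Pi.zero_apply]
      rw [hslice]
      exact (Polynomial.finite_setOf_isRoot hqs).measure_zero _
    -- transfer back to the pi space
    set T : Set (ℂ × (Fin k → ℂ)) :=
      {y | MvPolynomial.eval (Fin.cons y.1 y.2) p = 0} with hT
    have hTmeas : MeasurableSet T := by
      have : T = Prod.swap ⁻¹' T' := rfl
      rw [this]
      exact hT'meas.preimage measurable_swap
    have hTnull : ((volume : Measure ℂ).prod (volume : Measure (Fin k → ℂ))) T = 0 := by
      have hsw := (MeasureTheory.Measure.measurePreserving_swap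
        (μ := (volume : Measure ℂ))
        (ν := (volume : Measure (Fin k → ℂ)))).measure_preimage
        hT'meas.nullMeasurableSet
      have : T = Prod.swap ⁻¹' T' := rfl
      rw [this, hsw]
      exact hT'null
    have mp := MeasureTheory.volume_preserving_piFinSuccAbove (fun _ : Fin (k+1) => ℂ) 0
    have mpsymm := (mp).symm (MeasurableEquiv.piFinSuccAbove (fun _ : Fin (k+1) => ℂ) 0)
    set S : Set (Fin (k+1) → ℂ) := {x | MvPolynomial.eval x p = 0} with hS
    have hSmeas : MeasurableSet S := (measurable_mv_eval p) (measurableSet_singleton 0)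
    have hpre : (MeasurableEquiv.piFinSuccAbove (fun _ : Fin (k+1) => ℂ) 0).symm ⁻¹' S
        = T := by
      ext y
      simp only [Set.mem_preimage, hS, hT, Set.mem_setOf_eq]
      have hy : (MeasurableEquiv.piFinSuccAbove (fun _ : Fin (k+1) => ℂ) 0).symm y
          = Fin.cons y.1 y.2 := by
        show Fin.insertNth (α := fun _ => ℂ) (0 : Fin (k+1)) y.1 y.2 = _
        simp [Fin.insertNth_zero']
      rw [hy]
    have := mpsymm.measure_preimage hSmeas.nullMeasurableSet
    rw [hpre] at this
    have hvol : (volume : Measure (Fin (k+1) → ℂ)) S = 0 := by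
      rw [← this]
      exact hTnull
    exact hvol

private lemma mv_null {ι : Type*} [Fintype ι] (p : MvPolynomial ι ℂ) (hp : p ≠ 0) :
    volume {x : ι → ℂ | MvPolynomial.eval x p = 0} = 0 := by
  classical
  set k := Fintype.card ι
  set f : Fin k ≃ ι := (Fintype.equivFin ι).symm with hf
  have mp := MeasureTheory.volume_measurePreserving_piCongrLeft (fun _ : ι => ℂ) f
  set p' : MvPolynomial (Fin k) ℂ := MvPolynomial.rename f.symm p with hp'
  have hp'ne : p' ≠ 0 := fun h => hp ((MvPolynomial.rename_injective _ f.symm.injective)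
    (by simpa using h))
  have hmeasS : MeasurableSet {x : ι → ℂ | MvPolynomial.eval x p = 0} :=
    (measurable_mv_eval p) (measurableSet_singleton 0)
  have hpre : (MeasurableEquiv.piCongrLeft (fun _ : ι => ℂ) f) ⁻¹'
      {x : ι → ℂ | MvPolynomial.eval x p = 0}
      = {y : Fin k → ℂ | MvPolynomial.eval y p' = 0} := by
    ext y
    simp only [Set.mem_preimage, Set.mem_setOf_eq, hp', MvPolynomial.eval_rename]
    have hfun : ((MeasurableEquiv.piCongrLeft (fun _ : ι => ℂ) f) y) = y ∘ f.symm := by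
      funext i
      obtain ⟨j, rfl⟩ := f.surjective i
      rw [MeasurableEquiv.coe_piCongrLeft, Equiv.piCongrLeft_apply_apply]
      simp
    rw [hfun]
  have := mp.measure_preimage hmeasS.nullMeasurableSet
  rw [hpre] at this
  rw [← this]
  exact mv_null_fin k p' hp'ne

/-! ### Rank and submatrices -/

section RankLemmas

variable {K : Type*} [Field K]

private lemma rank_eq_finrank_span_cols_T {m k : Type*} [Fintype m] [Fintype k]
    (A : Matrix m k K) :
    A.rank = Module.finrank K (Submodule.span K (Set.range Aᵀ)) :=
  A.rank_eq_finrank_span_cols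

private lemma rank_submatrix_le'' {m k k' : Type*} [Fintype m] [Fintype k] [Fintype k']
    (A : Matrix m k K) (γ : k' → k) : (A.submatrix id γ).rank ≤ A.rank := by
  rw [rank_eq_finrank_span_cols_T, rank_eq_finrank_span_cols_T]
  apply Submodule.finrank_mono
  apply Submodule.span_mono
  rintro v ⟨j, rfl⟩
  exact ⟨γ j, rfl⟩

private lemma rank_submatrix_le' {m k m' k' : Type*} [Fintype m] [Fintype k]
    [Fintype m'] [Fintype k'] (A : Matrix m k K) (ρ : m' → m) (γ : k' → k) :
    (A.submatrix ρ γ).rank ≤ A.rank := by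
  have h1 : (A.submatrix ρ id).rank ≤ A.rank := by
    rw [← Matrix.rank_transpose (A.submatrix ρ id), ← Matrix.rank_transpose A]
    exact rank_submatrix_le'' Aᵀ ρ
  have h2 : ((A.submatrix ρ id).submatrix id γ).rank ≤ (A.submatrix ρ id).rank :=
    rank_submatrix_le'' _ γ
  have h3 : A.submatrix ρ γ = (A.submatrix ρ id).submatrix id γ := by
    rw [Matrix.submatrix_submatrix]; rfl
  rw [h3]
  exact le_trans h2 h1

private lemma exists_li_cols {m k : Type*} [Fintype m] [Fintype k]
    (v : k → (m → K)) (r : ℕ)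
    (hr : r ≤ Module.finrank K (Submodule.span K (Set.range v))) :
    ∃ γ : Fin r → k, LinearIndependent K (v ∘ γ) := by
  classical
  obtain ⟨s, hsub, hspan, hli⟩ := exists_linearIndependent K (Set.range v)
  have hsfin : s.Finite := (Set.finite_range v).subset hsub
  have : Fintype s := hsfin.fintype
  have hcard : Module.finrank K (Submodule.span K s) = s.toFinset.card :=
    finrank_span_set_eq_card hli
  have hrs : r ≤ Fintype.card s := by
    rw [← Set.toFinset_card, ← hcard, hspan]
    exact hr
  obtain ⟨e⟩ := Function.Embedding.nonempty_of_card_le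
    (by simpa using hrs : Fintype.card (Fin r) ≤ Fintype.card s)
  choose γ hγ using fun i : Fin r => hsub (e i).2
  refine ⟨γ, ?_⟩
  have hvγ : v ∘ γ = fun i => ((e i : s) : m → K) := funext fun i => hγ i
  rw [hvγ]
  exact hli.comp e e.injective

private lemma exists_det_ne_zero {m k : Type*} [Fintype m] [Fintype k]
    [DecidableEq m] [DecidableEq k] (A : Matrix m k K) (r : ℕ) (hr : r ≤ A.rank) :
    ∃ ρ : Fin r → m, ∃ γ : Fin r → k, (A.submatrix ρ γ).det ≠ 0 := by
  classical
  obtain ⟨γ, hγ⟩ := exists_li_cols Aᵀ r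
    (by rw [← rank_eq_finrank_span_cols_T]; exact hr)
  set B : Matrix m (Fin r) K := A.submatrix id γ with hB
  have hBT : Bᵀ = Aᵀ ∘ γ := rfl
  have hBTli : LinearIndependent K Bᵀ := by rw [hBT]; exact hγ
  have hBTrank : Bᵀ.rank = r := by
    have := LinearIndependent.rank_matrix (M := Bᵀ) hBTli
    simpa using this
  obtain ⟨ρ, hρ⟩ := exists_li_cols (fun t : m => B t) r (by
    have h1 := rank_eq_finrank_span_cols_T Bᵀ
    rw [Matrix.transpose_transpose] at h1
    rw [← h1, hBTrank])
  refine ⟨ρ, γ, ?_⟩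
  have hsq : A.submatrix ρ γ = B.submatrix ρ id := by
    rw [hB, Matrix.submatrix_submatrix]; rfl
  rw [hsq]
  have hli : LinearIndependent K (fun i => (B.submatrix ρ id) i) := hρ
  have hunit := Matrix.linearIndependent_rows_iff_isUnit.mp hli
  exact ((Matrix.isUnit_iff_isUnit_det _).mp hunit).ne_zero

private lemma range_cols_fromColumns {m k₁ k₂ : Type*}
    (A : Matrix m k₁ K) (B : Matrix m k₂ K) :
    Set.range (Matrix.fromCols A B)ᵀ = Set.range Aᵀ ∪ Set.range Bᵀ := by
  rw [Matrix.transpose_fromCols]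
  exact Set.Sum.elim_range _ _

private lemma rank_fromColumns_comm {m k₁ k₂ : Type*} [Fintype m] [Fintype k₁] [Fintype k₂]
    (A : Matrix m k₁ K) (B : Matrix m k₂ K) :
    (Matrix.fromCols A B).rank = (Matrix.fromCols B A).rank := by
  rw [rank_eq_finrank_span_cols_T, rank_eq_finrank_span_cols_T,
    range_cols_fromColumns, range_cols_fromColumns, Set.union_comm]

private lemma rank_left_le_fromColumns {m k₁ k₂ : Type*} [Fintype m] [Fintype k₁] [Fintype k₂]
    (A : Matrix m k₁ K) (B : Matrix m k₂ K) :
    A.rank ≤ (Matrix.fromCols A B).rank := by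
  rw [rank_eq_finrank_span_cols_T, rank_eq_finrank_span_cols_T]
  apply Submodule.finrank_mono
  apply Submodule.span_mono
  rw [range_cols_fromColumns]
  exact Set.subset_union_left

end RankLemmas

/-! ### Existence of a good channel realization -/

private lemma step1 {n m₁ m₂ : ℕ} (r : ℕ)
    (V₁ : Matrix (Fin n) (Fin m₁) ℂ) (V₂ : Matrix (Fin n) (Fin m₂) ℂ)
    (hr₁ : r ≤ V₁.rank)
    (hW : (Matrix.fromCols V₁ V₂).rank = r)
    (t : Fin n)
    (ht : (Pi.single t 1 : Fin n → ℂ) ∉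
      Submodule.span ℂ (Set.range (Matrix.fromCols V₁ V₂)ᵀ))
    (c : Fin m₂) (hc : V₂ t c ≠ 0) :
    r + 1 ≤ (Matrix.fromCols V₁
      (Matrix.diagonal (fun j => if j = t then (2:ℂ) else 1) * V₂)).rank := by
  classical
  set W := Submodule.span ℂ (Set.range (Matrix.fromCols V₁ V₂)ᵀ) with hWdef
  set d : Fin n → ℂ := fun j => if j = t then (2:ℂ) else 1 with hd
  set M' := Matrix.fromCols V₁ (Matrix.diagonal d * V₂) with hM'
  set U := Submodule.span ℂ (Set.range M'ᵀ) with hU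
  have hWr : Module.finrank ℂ W = r := by
    rw [hWdef, ← rank_eq_finrank_span_cols_T]; exact hW
  have hW1le : Submodule.span ℂ (Set.range V₁ᵀ) ≤ W := by
    apply Submodule.span_mono
    rw [range_cols_fromColumns]
    exact Set.subset_union_left
  have hW1 : Submodule.span ℂ (Set.range V₁ᵀ) = W := by
    apply Submodule.eq_of_le_of_finrank_le hW1le
    rw [hWr]
    calc r ≤ V₁.rank := hr₁
    _ = _ := rank_eq_finrank_span_cols_T V₁
  have hWU : W ≤ U := by
    rw [← hW1]
    apply Submodule.span_mono
    rw [hM', range_cols_fromColumns]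
    exact Set.subset_union_left
  have hsingle : (Pi.single t 1 : Fin n → ℂ) ∈ U := by
    have hcol : (Matrix.diagonal d * V₂)ᵀ c ∈ U := Submodule.subset_span (by
      rw [hM', range_cols_fromColumns]
      exact Or.inr ⟨c, rfl⟩)
    have hv2 : V₂ᵀ c ∈ U := by
      apply hWU
      apply Submodule.subset_span
      rw [range_cols_fromColumns]
      exact Or.inr ⟨c, rfl⟩
    have hkey : (Matrix.diagonal d * V₂)ᵀ c
        = V₂ᵀ c + (V₂ t c) • (Pi.single t 1 : Fin n → ℂ) := by
      funext j
      simp only [Matrix.transpose_apply, Matrix.diagonal_mul, Pi.add_apply,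
        Pi.smul_apply, smul_eq_mul]
      by_cases hj : j = t
      · subst hj
        simp only [hd, if_pos rfl, Pi.single_eq_same, mul_one]
        ring
      · simp [hd, hj, Pi.single_eq_of_ne hj]
    have hdiff : (V₂ t c) • (Pi.single t 1 : Fin n → ℂ)
        = (Matrix.diagonal d * V₂)ᵀ c - V₂ᵀ c := by
      rw [hkey]; abel
    have hmem : (V₂ t c) • (Pi.single t 1 : Fin n → ℂ) ∈ U := by
      rw [hdiff]; exact Submodule.sub_mem _ hcol hv2
    have := Submodule.smul_mem U (V₂ t c)⁻¹ hmem
    rwa [smul_smul, inv_mul_cancel₀ hc, one_smul] at this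
  by_contra hcon
  push_neg at hcon
  have hUr : Module.finrank ℂ U ≤ r := by
    have : M'.rank ≤ r := by omega
    rw [hU, ← rank_eq_finrank_span_cols_T]
    exact this
  have hWeq : W = U := Submodule.eq_of_le_of_finrank_le hWU (by rw [hWr]; exact hUr)
  exact ht (hWeq ▸ hsingle)

/-- Almost-sure form of Lemma 1: if two matrices each have rank at least `n/2`
but share fewer than `n/2` common zero rows, then the set of diagonal channel
realizations under which the joint interference has rank at most `n/2` is
Lebesgue-null. -/
theorem stmt_1 (n m₁ m₂ : ℕ) (hn : 0 < n) (hne : Even n)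
    (V₁ : Matrix (Fin n) (Fin m₁) ℂ) (V₂ : Matrix (Fin n) (Fin m₂) ℂ)
    (hr₁ : n / 2 ≤ V₁.rank) (hr₂ : n / 2 ≤ V₂.rank)
    (hz : {t : Fin n | (∀ c, V₁ t c = 0) ∧ (∀ c, V₂ t c = 0)}.ncard < n / 2) :
    MeasureTheory.volume {p : (Fin n → ℂ) × (Fin n → ℂ) |
      (Matrix.fromCols (Matrix.diagonal p.1 * V₁)
        (Matrix.diagonal p.2 * V₂)).rank ≤ n / 2} = 0 := by
  classical
  set r := n / 2 with hrdef
  set Mfun : ((Fin n → ℂ) × (Fin n → ℂ)) → Matrix (Fin n) (Fin m₁ ⊕ Fin m₂) ℂ :=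
    fun p => Matrix.fromCols (Matrix.diagonal p.1 * V₁) (Matrix.diagonal p.2 * V₂)
    with hMfun
  -- Step 1: find p₀ with r + 1 ≤ rank
  have hex : ∃ p₀, r + 1 ≤ (Mfun p₀).rank := by
    by_cases hbig : r < (Matrix.fromCols V₁ V₂).rank
    · refine ⟨(1, 1), ?_⟩
      have h11 : Mfun (1, 1) = Matrix.fromCols V₁ V₂ := by
        simp [hMfun, show (Matrix.diagonal (1 : Fin n → ℂ)) = 1 from Matrix.diagonal_one]
      rw [h11]
      exact hbig
    · push_neg at hbig
      have hWrank : (Matrix.fromCols V₁ V₂).rank = r :=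
        le_antisymm hbig (le_trans hr₁ (rank_left_le_fromColumns V₁ V₂))
      set W := Submodule.span ℂ (Set.range (Matrix.fromCols V₁ V₂)ᵀ) with hWdef
      have hWfr : Module.finrank ℂ W = r := by
        rw [hWdef, ← rank_eq_finrank_span_cols_T]; exact hWrank
      set E : Set (Fin n) := {t | (Pi.single t 1 : Fin n → ℂ) ∈ W} with hE
      have hEfin : Fintype E := Fintype.ofFinite _
      have hEcard : E.ncard ≤ r := by
        have hli0 : LinearIndependent ℂ
            (fun t : Fin n => (Pi.single t 1 : Fin n → ℂ)) := by
          have := (Pi.basisFun ℂ (Fin n)).linearIndependent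
          convert this using 2 with t
          rw [Pi.basisFun_apply]
        have hliE : LinearIndependent ℂ
            (fun t : E => (Pi.single (t : Fin n) 1 : Fin n → ℂ)) :=
          hli0.comp _ Subtype.val_injective
        have hliW : LinearIndependent ℂ
            (fun t : E => (⟨Pi.single (t : Fin n) 1, t.2⟩ : W)) := by
          apply LinearIndependent.of_comp W.subtype
          exact hliE
        have hcard := hliW.fintype_card_le_finrank
        rw [hWfr] at hcard
        have : E.ncard = Fintype.card E := by
          rw [← Nat.card_coe_set_eq, Nat.card_eq_fintype_card]
        omega
      set S : Set (Fin n) := {t | (∀ c, V₁ t c = 0) ∧ (∀ c, V₂ t c = 0)} with hSdef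
      obtain ⟨w, hw⟩ := hne
      have hrw : r = w := by omega
      have hunion : (E ∪ S).ncard < n := by
        have h1 := Set.ncard_union_le E S
        omega
      obtain ⟨t, ht⟩ : ∃ t, t ∉ E ∪ S := by
        by_contra h
        push_neg at h
        have huniv : E ∪ S = Set.univ := Set.eq_univ_of_forall h
        rw [huniv, Set.ncard_univ, Nat.card_eq_fintype_card, Fintype.card_fin] at hunion
        omega
      have htE : t ∉ E := fun h => ht (Or.inl h)
      have htS : t ∉ S := fun h => ht (Or.inr h)
      have hnz : (∃ c, V₁ t c ≠ 0) ∨ (∃ c, V₂ t c ≠ 0) := by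
        by_contra h
        push_neg at h
        exact htS ⟨h.1, h.2⟩
      rcases hnz with ⟨c, hc⟩ | ⟨c, hc⟩
      · -- V₁ has a nonzero entry in row t : swap the roles
        have hW' : (Matrix.fromCols V₂ V₁).rank = r := by
          rw [rank_fromColumns_comm]; exact hWrank
        have hspan_eq : Submodule.span ℂ (Set.range (Matrix.fromCols V₂ V₁)ᵀ) = W := by
          rw [hWdef, range_cols_fromColumns, range_cols_fromColumns, Set.union_comm]
        have ht' : (Pi.single t 1 : Fin n → ℂ) ∉
            Submodule.span ℂ (Set.range (Matrix.fromCols V₂ V₁)ᵀ) := by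
          rw [hspan_eq]; exact htE
        have hstep := step1 r V₂ V₁ hr₂ hW' t ht' c hc
        refine ⟨((fun j => if j = t then (2:ℂ) else 1), 1), ?_⟩
        have heq : Mfun ((fun j => if j = t then (2:ℂ) else 1), 1)
            = Matrix.fromCols
              (Matrix.diagonal (fun j => if j = t then (2:ℂ) else 1) * V₁) V₂ := by
          simp [hMfun, show (Matrix.diagonal (1 : Fin n → ℂ)) = 1 from Matrix.diagonal_one]
        rw [heq, ← rank_fromColumns_comm]
        exact hstep
      · have ht' : (Pi.single t 1 : Fin n → ℂ) ∉
            Submodule.span ℂ (Set.range (Matrix.fromCols V₁ V₂)ᵀ) := htE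
        have hstep := step1 r V₁ V₂ hr₁ hWrank t ht' c hc
        refine ⟨(1, (fun j => if j = t then (2:ℂ) else 1)), ?_⟩
        have heq : Mfun (1, (fun j => if j = t then (2:ℂ) else 1))
            = Matrix.fromCols V₁
              (Matrix.diagonal (fun j => if j = t then (2:ℂ) else 1) * V₂) := by
          simp [hMfun, show (Matrix.diagonal (1 : Fin n → ℂ)) = 1 from Matrix.diagonal_one]
        rw [heq]
        exact hstep
  obtain ⟨p₀, hp₀⟩ := hex
  obtain ⟨ρ, γ, hdet⟩ := exists_det_ne_zero (Mfun p₀) (r + 1) hp₀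
  -- the polynomial
  set N : Matrix (Fin (r+1)) (Fin (r+1)) (MvPolynomial (Fin n ⊕ Fin n) ℂ) := fun i j =>
    Sum.elim
      (fun c₁ => (MvPolynomial.X (Sum.inl (ρ i)) : MvPolynomial (Fin n ⊕ Fin n) ℂ)
        * MvPolynomial.C (V₁ (ρ i) c₁))
      (fun c₂ => (MvPolynomial.X (Sum.inr (ρ i)) : MvPolynomial (Fin n ⊕ Fin n) ℂ)
        * MvPolynomial.C (V₂ (ρ i) c₂)) (γ j) with hN
  set P : MvPolynomial (Fin n ⊕ Fin n) ℂ := N.det with hP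
  have hevalP : ∀ x : (Fin n ⊕ Fin n) → ℂ,
      MvPolynomial.eval x P = ((Mfun (x ∘ Sum.inl, x ∘ Sum.inr)).submatrix ρ γ).det := by
    intro x
    rw [hP, RingHom.map_det (MvPolynomial.eval x) N]
    congr 1
    ext i j
    simp only [RingHom.mapMatrix_apply, Matrix.map_apply, Matrix.submatrix_apply, hN, hMfun]
    cases hγj : γ j with
    | inl c =>
      change MvPolynomial.eval x (N i j) = _
      simp [hN, hγj, Matrix.fromCols_apply_inl, Matrix.diagonal_mul]
    | inr c =>
      change MvPolynomial.eval x (N i j) = _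
      simp [hN, hγj, Matrix.fromCols_apply_inr, Matrix.diagonal_mul]
  have hPne : P ≠ 0 := by
    intro h
    apply hdet
    have hev := hevalP (Sum.elim p₀.1 p₀.2)
    rw [h] at hev
    simp only [map_zero] at hev
    have hcomp : ((Sum.elim p₀.1 p₀.2) ∘ Sum.inl, (Sum.elim p₀.1 p₀.2) ∘ Sum.inr) = p₀ := by
      simp
    rw [hcomp] at hev
    exact hev.symm
  have hnull := mv_null P hPne
  -- transfer to the product space
  have mp := MeasureTheory.measurePreserving_sumPiEquivProdPi
    (fun _ : Fin n ⊕ Fin n => (volume : Measure ℂ))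
  set D : Set ((Fin n → ℂ) × (Fin n → ℂ)) :=
    {p | ((Mfun p).submatrix ρ γ).det = 0} with hD
  have hDalt : D = {p : (Fin n → ℂ) × (Fin n → ℂ) |
      MvPolynomial.eval (Sum.elim p.1 p.2) P = 0} := by
    ext p
    simp only [hD, Set.mem_setOf_eq, hevalP (Sum.elim p.1 p.2)]
    have hcomp : ((Sum.elim p.1 p.2) ∘ Sum.inl, (Sum.elim p.1 p.2) ∘ Sum.inr) = p := by
      simp
    rw [hcomp]
  have hDmeas : MeasurableSet D := by
    rw [hDalt]
    refine ((measurable_mv_eval P).comp ?_) (measurableSet_singleton 0)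
    refine measurable_pi_lambda _ fun i => ?_
    cases i with
    | inl i => exact (measurable_pi_apply i).comp measurable_fst
    | inr i => exact (measurable_pi_apply i).comp measurable_snd
  have hpre : (MeasurableEquiv.sumPiEquivProdPi (fun _ : Fin n ⊕ Fin n => ℂ)) ⁻¹' D
      = {x : (Fin n ⊕ Fin n) → ℂ | MvPolynomial.eval x P = 0} := by
    ext x
    rw [hDalt]
    simp only [Set.mem_preimage, Set.mem_setOf_eq, MeasurableEquiv.sumPiEquivProdPi,
      MeasurableEquiv.coe_mk, Equiv.sumPiEquivProdPi_apply]
    have hx : Sum.elim (fun i => x (Sum.inl i)) (fun i => x (Sum.inr i)) = x := by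
      funext i; cases i <;> rfl
    rw [hx]
  have hD0 : volume D = 0 := by
    have hpp := mp.measure_preimage hDmeas.nullMeasurableSet
    rw [hpre] at hpp
    have : ((Measure.pi fun _ : Fin n => (volume : Measure ℂ)).prod
        (Measure.pi fun _ : Fin n => (volume : Measure ℂ))) D = 0 := by
      rw [← hpp]
      exact hnull
    exact this
  apply measure_mono_null _ hD0
  intro p hp
  simp only [Set.mem_setOf_eq] at hp ⊢
  rw [hD, Set.mem_setOf_eq]
  by_contra hne0
  have hunit : IsUnit ((Mfun p).submatrix ρ γ) :=
    (Matrix.isUnit_iff_isUnit_det _).mpr (isUnit_iff_ne_zero.mpr hne0)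
  have hrk := Matrix.rank_of_isUnit _ hunit
  rw [Fintype.card_fin] at hrk
  have hle := rank_submatrix_le' (Mfun p) ρ γ
  rw [hrk] at hle
  have : (Mfun p).rank ≤ r := hp
  omega
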